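/- arXiv:0810.5717 — 5 statements merged into one kernel-verified Lean document; each statement's English description precedes it below -/
import Mathlib

section
/- Completeness of system A relative to semi-lattice inclusion: if C is a finite set of CI statements over S and c is a CI statement with L(c) ⊆ ⋃_{c' ∈ C} L(c'), then c is derivable from C using the inference rules triviality, symmetry, decomposition, contraction, strong union, and strong contraction. -/
open Finset

/-- A CI statement (A ⊥ B | C): pairwise disjoint finsets. -/
structure CI (α : Type*) [DecidableEq α] where
  A : Finset α
  B : Finset α
  C : Finset α
  dAB : Disjoint A B
  dAC : Disjoint A C
  dBC : Disjoint B C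

def ciLattice {α : Type*} [Fintype α] [DecidableEq α] (c : CI α) : Set (Finset α) :=
  {U | c.C ⊆ U ∧ ¬ c.A ⊆ U ∧ ¬ c.B ⊆ U}

/-- Derivability under system A: triviality, symmetry, decomposition, contraction,
strong union, strong contraction. -/
inductive Derivable {α : Type*} [DecidableEq α] (𝒞 : Set (CI α)) : CI α → Prop
  | mem {c : CI α} : c ∈ 𝒞 → Derivable 𝒞 c
  | triviality (A C : Finset α) (hAC : Disjoint A C) :
      Derivable 𝒞 ⟨A, ∅, C, by simp, hAC, by simp⟩
  | symmetry {A B C : Finset α} {h1 : Disjoint A B} {h2 : Disjoint A C} {h3 : Disjoint B C} :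
      Derivable 𝒞 ⟨A, B, C, h1, h2, h3⟩ →
      Derivable 𝒞 ⟨B, A, C, h1.symm, h3, h2⟩
  | decomposition {A B D C : Finset α} {h1 : Disjoint A (B ∪ D)} {h2 : Disjoint A C}
      {h3 : Disjoint (B ∪ D) C} :
      Derivable 𝒞 ⟨A, B ∪ D, C, h1, h2, h3⟩ →
      Derivable 𝒞 ⟨A, D, C, by simp_all [Finset.disjoint_union_right],
        h2, by simp_all [Finset.disjoint_union_left]⟩
  | contraction {A B D C : Finset α} {h1 : Disjoint A B} {h2 : Disjoint A (C ∪ D)}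
      {h3 : Disjoint B (C ∪ D)} {h4 : Disjoint A D} {h5 : Disjoint D C}
      (hBD : Disjoint B D) :
      Derivable 𝒞 ⟨A, B, C ∪ D, h1, h2, h3⟩ →
      Derivable 𝒞 ⟨A, D, C, h4, by simp_all [Finset.disjoint_union_right], h5⟩ →
      Derivable 𝒞 ⟨A, B ∪ D, C, by simp_all [Finset.disjoint_union_right],
        by simp_all [Finset.disjoint_union_right],
        by simp_all [Finset.disjoint_union_left, Finset.disjoint_union_right]⟩
  | strongUnion {A B C D : Finset α} {h1 : Disjoint A B} {h2 : Disjoint A C}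
      {h3 : Disjoint B C} (hAD : Disjoint A D) (hBD : Disjoint B D) :
      Derivable 𝒞 ⟨A, B, C, h1, h2, h3⟩ →
      Derivable 𝒞 ⟨A, B, C ∪ D, h1, by simp_all [Finset.disjoint_union_right],
        by simp_all [Finset.disjoint_union_right]⟩
  | strongContraction {A B C D E : Finset α}
      {h1 : Disjoint A B} {h2 : Disjoint A C} {h3 : Disjoint B C}
      {h4 : Disjoint D E} {h5 : Disjoint D (A ∪ C)} {h6 : Disjoint E (A ∪ C)}
      {h7 : Disjoint D (B ∪ C)} {h8 : Disjoint E (B ∪ C)} :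
      Derivable 𝒞 ⟨A, B, C, h1, h2, h3⟩ →
      Derivable 𝒞 ⟨D, E, A ∪ C, h4, h5, h6⟩ →
      Derivable 𝒞 ⟨D, E, B ∪ C, h4, h7, h8⟩ →
      Derivable 𝒞 ⟨D, E, C, h4, by simp_all [Finset.disjoint_union_right],
        by simp_all [Finset.disjoint_union_right]⟩

section Helpers
variable {α : Type*} [DecidableEq α] {𝒞 : Set (CI α)}

lemma d_congr {c c' : CI α} (h : Derivable 𝒞 c)
    (hA : c.A = c'.A) (hB : c.B = c'.B) (hC : c.C = c'.C) : Derivable 𝒞 c' := by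
  obtain ⟨A, B, C, _, _, _⟩ := c
  obtain ⟨A', B', C', _, _, _⟩ := c'
  dsimp at hA hB hC
  subst hA; subst hB; subst hC
  exact h

lemma d_subB {A B B' C : Finset α} {h1 : Disjoint A B} {h2 : Disjoint A C}
    {h3 : Disjoint B C} {g1 : Disjoint A B'} {g3 : Disjoint B' C} (hB : B' ⊆ B)
    (h : Derivable 𝒞 ⟨A, B, C, h1, h2, h3⟩) :
    Derivable 𝒞 ⟨A, B', C, g1, h2, g3⟩ := by
  have e : B \ B' ∪ B' = B := sdiff_union_of_subset hB
  have h' : Derivable 𝒞 ⟨A, B \ B' ∪ B', C, h1.mono_right (le_of_eq e), h2,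
      h3.mono_left (le_of_eq e)⟩ := d_congr h rfl e.symm rfl
  exact Derivable.decomposition h'

lemma d_sub {A B C A' B' : Finset α} {h1 : Disjoint A B} {h2 : Disjoint A C}
    {h3 : Disjoint B C} {g1 : Disjoint A' B'} {g2 : Disjoint A' C} {g3 : Disjoint B' C}
    (hA : A' ⊆ A) (hB : B' ⊆ B)
    (h : Derivable 𝒞 ⟨A, B, C, h1, h2, h3⟩) : Derivable 𝒞 ⟨A', B', C, g1, g2, g3⟩ := by
  have s1 : Derivable 𝒞 ⟨A, B', C, h1.mono_right hB, h2, h3.mono_left hB⟩ := d_subB hB h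
  have s2 : Derivable 𝒞 ⟨B', A, C, (h1.mono_right hB).symm, h3.mono_left hB, h2⟩ :=
    Derivable.symmetry s1
  have s3 : Derivable 𝒞 ⟨B', A', C, (h1.mono hA hB).symm, h3.mono_left hB,
      h2.mono_left hA⟩ := d_subB hA s2
  exact Derivable.symmetry s3

lemma d_up {A B C C' : Finset α} {h1 : Disjoint A B} {h2 : Disjoint A C}
    {h3 : Disjoint B C} {g2 : Disjoint A C'} {g3 : Disjoint B C'}
    (hC : C ⊆ C') (h : Derivable 𝒞 ⟨A, B, C, h1, h2, h3⟩) :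
    Derivable 𝒞 ⟨A, B, C', h1, g2, g3⟩ := by
  have hAD : Disjoint A (C' \ C) := g2.mono_right sdiff_le
  have hBD : Disjoint B (C' \ C) := g3.mono_right sdiff_le
  have h' := Derivable.strongUnion hAD hBD h
  exact d_congr h' rfl rfl (union_sdiff_of_subset hC)

variable [Fintype α]

lemma lat_mono {c c' : CI α} (hC : c.C ⊆ c'.C) (hA : c'.A ⊆ c.A) (hB : c'.B ⊆ c.B) :
    ciLattice c' ⊆ ciLattice c := fun U hU =>
  ⟨hC.trans hU.1, fun s => hU.2.1 (hA.trans s), fun s => hU.2.2 (hB.trans s)⟩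

lemma lat_mono_swap {c c' : CI α} (hC : c.C ⊆ c'.C) (hA : c'.A ⊆ c.B) (hB : c'.B ⊆ c.A) :
    ciLattice c' ⊆ ciLattice c := fun U hU =>
  ⟨hC.trans hU.1, fun s => hU.2.2 (hB.trans s), fun s => hU.2.1 (hA.trans s)⟩

def meas (c : CI α) : ℕ :=
  (2 * Fintype.card α + 1) * (Fintype.card α - c.C.card) + c.A.card + c.B.card

lemma meas_lt_cond {c c' : CI α} (h : c.C.card < c'.C.card) : meas c' < meas c := by
  have hC' : c'.C.card ≤ Fintype.card α := Finset.card_le_univ _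
  have hA : c'.A.card ≤ Fintype.card α := Finset.card_le_univ _
  have hB : c'.B.card ≤ Fintype.card α := Finset.card_le_univ _
  set n := Fintype.card α with hn
  have e1 : n - c'.C.card + 1 ≤ n - c.C.card := by omega
  have e2 : (2 * n + 1) * (n - c'.C.card + 1) ≤ (2 * n + 1) * (n - c.C.card) :=
    Nat.mul_le_mul_left _ e1
  rw [Nat.mul_add, Nat.mul_one] at e2
  unfold meas
  set P := (2 * n + 1) * (n - c'.C.card) with hP
  set Q := (2 * n + 1) * (n - c.C.card) with hQ
  omega

lemma meas_lt_AB {c c' : CI α} (hC : c'.C = c.C)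
    (h : c'.A.card + c'.B.card < c.A.card + c.B.card) : meas c' < meas c := by
  unfold meas
  rw [hC]
  set X := (2 * Fintype.card α + 1) * (Fintype.card α - c.C.card) with hX
  omega

end Helpers
section Main
variable {α : Type*} [Fintype α] [DecidableEq α] {𝒞 : Set (CI α)}

lemma sc_step {x y q : α} {C : Finset α} {p1 p2 p3 r1 r2 r3 g1 g2 g3}
    (hyq : y ≠ q)
    (dq : Derivable 𝒞 ⟨{x}, {q}, C, p1, p2, p3⟩)
    (P : Derivable 𝒞 ⟨{x}, {y}, C ∪ {q}, r1, r2, r3⟩) :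
    Derivable 𝒞 ⟨{x}, {y}, C, g1, g2, g3⟩ := by
  have hBD : Disjoint ({y} : Finset α) ({q} : Finset α) := by simp [hyq, Ne.symm hyq]
  have h := Derivable.contraction hBD P dq
  exact d_sub Finset.Subset.rfl Finset.subset_union_left h

lemma key :
    ∀ (N : ℕ) (c : CI α), meas c < N →
      ciLattice c ⊆ ⋃ c' ∈ 𝒞, ciLattice c' → Derivable 𝒞 c := by
  intro N
  induction N with
  | zero => exact fun c h _ => absurd h (Nat.not_lt_zero _)
  | succ N ih =>
    intro c hm hH
    obtain ⟨A, B, C, d1, d2, d3⟩ := c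
    have IH : ∀ c' : CI α, meas c' < meas (⟨A, B, C, d1, d2, d3⟩ : CI α) →
        ciLattice c' ⊆ ⋃ c'' ∈ 𝒞, ciLattice c'' → Derivable 𝒞 c' :=
      fun c' h hh => ih c' (by omega) hh
    by_cases hA0 : A = ∅
    · subst hA0
      exact Derivable.symmetry (Derivable.triviality B C d3)
    by_cases hB0 : B = ∅
    · subst hB0
      exact Derivable.triviality A C d2
    have hAne : A.Nonempty := Finset.nonempty_iff_ne_empty.mpr hA0
    have hBne : B.Nonempty := Finset.nonempty_iff_ne_empty.mpr hB0
    by_cases h2B : 2 ≤ B.card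
    · -- grow the B side by contraction
      obtain ⟨x, hx⟩ := hBne
      have hxC : x ∉ C := Finset.disjoint_left.mp d3 hx
      have hxA : x ∉ A := Finset.disjoint_right.mp d1 hx
      have hxB' : x ∉ B.erase x := Finset.notMem_erase x B
      have q1 : Disjoint A (B.erase x) := d1.mono_right (Finset.erase_subset x B)
      have q2 : Disjoint A (C ∪ {x}) :=
        Finset.disjoint_union_right.mpr ⟨d2, Finset.disjoint_singleton_right.mpr hxA⟩
      have q3 : Disjoint (B.erase x) (C ∪ {x}) :=
        Finset.disjoint_union_right.mpr ⟨d3.mono_left (Finset.erase_subset x B),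
          Finset.disjoint_singleton_right.mpr hxB'⟩
      have hCC : C.card < (C ∪ {x}).card :=
        Finset.card_lt_card ((Finset.ssubset_iff_of_subset Finset.subset_union_left).mpr
          ⟨x, Finset.mem_union_right _ (Finset.mem_singleton_self x), hxC⟩)
      have P1 : Derivable 𝒞 ⟨A, B.erase x, C ∪ {x}, q1, q2, q3⟩ :=
        IH _ (meas_lt_cond hCC)
          ((lat_mono (c := ⟨A, B, C, d1, d2, d3⟩)
            (c' := ⟨A, B.erase x, C ∪ {x}, q1, q2, q3⟩) Finset.subset_union_left
            Finset.Subset.rfl (Finset.erase_subset x B)).trans hH)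
      have P2 : Derivable 𝒞 ⟨A, {x}, C, Finset.disjoint_singleton_right.mpr hxA, d2,
          Finset.disjoint_singleton_left.mpr hxC⟩ :=
        IH _ (meas_lt_AB rfl (by
            show A.card + ({x} : Finset α).card < A.card + B.card
            simp only [Finset.card_singleton]; omega))
          ((lat_mono (c := ⟨A, B, C, d1, d2, d3⟩)
            (c' := ⟨A, {x}, C, Finset.disjoint_singleton_right.mpr hxA, d2,
              Finset.disjoint_singleton_left.mpr hxC⟩) Finset.Subset.rfl Finset.Subset.rfl
            (Finset.singleton_subset_iff.mpr hx)).trans hH)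
      have hBD : Disjoint (B.erase x) ({x} : Finset α) :=
        Finset.disjoint_singleton_right.mpr hxB'
      have hcon := Derivable.contraction hBD P1 P2
      exact d_congr hcon rfl (by
        show B.erase x ∪ {x} = B
        rw [Finset.union_comm, ← Finset.insert_eq]; exact Finset.insert_erase hx) rfl
    by_cases h2A : 2 ≤ A.card
    · -- grow the A side by contraction (after symmetry)
      obtain ⟨y, hy⟩ := hAne
      have hyC : y ∉ C := Finset.disjoint_left.mp d2 hy
      have hyB : y ∉ B := Finset.disjoint_left.mp d1 hy
      have hyA' : y ∉ A.erase y := Finset.notMem_erase y A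
      have q1 : Disjoint B (A.erase y) := d1.symm.mono_right (Finset.erase_subset y A)
      have q2 : Disjoint B (C ∪ {y}) :=
        Finset.disjoint_union_right.mpr ⟨d3, Finset.disjoint_singleton_right.mpr hyB⟩
      have q3 : Disjoint (A.erase y) (C ∪ {y}) :=
        Finset.disjoint_union_right.mpr ⟨d2.mono_left (Finset.erase_subset y A),
          Finset.disjoint_singleton_right.mpr hyA'⟩
      have hCC : C.card < (C ∪ {y}).card :=
        Finset.card_lt_card ((Finset.ssubset_iff_of_subset Finset.subset_union_left).mpr
          ⟨y, Finset.mem_union_right _ (Finset.mem_singleton_self y), hyC⟩)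
      have P1 : Derivable 𝒞 ⟨B, A.erase y, C ∪ {y}, q1, q2, q3⟩ :=
        IH _ (meas_lt_cond hCC)
          ((lat_mono_swap (c := ⟨A, B, C, d1, d2, d3⟩)
            (c' := ⟨B, A.erase y, C ∪ {y}, q1, q2, q3⟩) Finset.subset_union_left
            Finset.Subset.rfl (Finset.erase_subset y A)).trans hH)
      have P2 : Derivable 𝒞 ⟨B, {y}, C, Finset.disjoint_singleton_right.mpr hyB, d3,
          Finset.disjoint_singleton_left.mpr hyC⟩ :=
        IH _ (meas_lt_AB rfl (by
            show B.card + ({y} : Finset α).card < A.card + B.card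
            simp only [Finset.card_singleton]; omega))
          ((lat_mono_swap (c := ⟨A, B, C, d1, d2, d3⟩)
            (c' := ⟨B, {y}, C, Finset.disjoint_singleton_right.mpr hyB, d3,
              Finset.disjoint_singleton_left.mpr hyC⟩) Finset.Subset.rfl Finset.Subset.rfl
            (Finset.singleton_subset_iff.mpr hy)).trans hH)
      have hBD : Disjoint (A.erase y) ({y} : Finset α) :=
        Finset.disjoint_singleton_right.mpr hyA'
      have hcon := Derivable.contraction hBD P1 P2
      have t : Derivable 𝒞 ⟨B, A, C, d1.symm, d3, d2⟩ :=
        d_congr hcon rfl (by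
          show A.erase y ∪ {y} = A
          rw [Finset.union_comm, ← Finset.insert_eq]; exact Finset.insert_erase hy) rfl
      exact Derivable.symmetry t
    -- singleton case
    have hA1 : A.card = 1 := by have := Finset.card_pos.mpr hAne; omega
    have hB1 : B.card = 1 := by have := Finset.card_pos.mpr hBne; omega
    obtain ⟨x, rfl⟩ := Finset.card_eq_one.mp hA1
    obtain ⟨y, rfl⟩ := Finset.card_eq_one.mp hB1
    have hxy : x ≠ y := by simpa using Finset.disjoint_singleton_left.mp d1
    have hxC : x ∉ C := Finset.disjoint_singleton_left.mp d2
    have hyC : y ∉ C := Finset.disjoint_singleton_left.mp d3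
    have IHup : ∀ (z : α) (hz : z ∉ C) (hzx : z ≠ x) (hzy : z ≠ y),
        Derivable 𝒞 ⟨{x}, {y}, C ∪ {z}, d1,
          Finset.disjoint_union_right.mpr ⟨d2, by simp [hzx, hzx.symm]⟩,
          Finset.disjoint_union_right.mpr ⟨d3, by simp [hzy, hzy.symm]⟩⟩ := by
      intro z hz hzx hzy
      refine IH _ (meas_lt_cond ?_) ((lat_mono (c := ⟨{x}, {y}, C, d1, d2, d3⟩)
        (c' := ⟨{x}, {y}, C ∪ {z}, d1,
          Finset.disjoint_union_right.mpr ⟨d2, by simp [hzx, hzx.symm]⟩,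
          Finset.disjoint_union_right.mpr ⟨d3, by simp [hzy, hzy.symm]⟩⟩)
        Finset.subset_union_left Finset.Subset.rfl Finset.Subset.rfl).trans hH)
      exact Finset.card_lt_card ((Finset.ssubset_iff_of_subset Finset.subset_union_left).mpr
        ⟨z, Finset.mem_union_right _ (Finset.mem_singleton_self z), hz⟩)
    have IHupYX : ∀ (z : α) (hz : z ∉ C) (hzx : z ≠ x) (hzy : z ≠ y),
        Derivable 𝒞 ⟨{y}, {x}, C ∪ {z}, d1.symm,
          Finset.disjoint_union_right.mpr ⟨d3, by simp [hzy, hzy.symm]⟩,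
          Finset.disjoint_union_right.mpr ⟨d2, by simp [hzx, hzx.symm]⟩⟩ := by
      intro z hz hzx hzy
      refine IH _ (meas_lt_cond ?_) ((lat_mono_swap (c := ⟨{x}, {y}, C, d1, d2, d3⟩)
        (c' := ⟨{y}, {x}, C ∪ {z}, d1.symm,
          Finset.disjoint_union_right.mpr ⟨d3, by simp [hzy, hzy.symm]⟩,
          Finset.disjoint_union_right.mpr ⟨d2, by simp [hzx, hzx.symm]⟩⟩)
        Finset.subset_union_left Finset.Subset.rfl Finset.Subset.rfl).trans hH)
      exact Finset.card_lt_card ((Finset.ssubset_iff_of_subset Finset.subset_union_left).mpr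
        ⟨z, Finset.mem_union_right _ (Finset.mem_singleton_self z), hz⟩)
    have IHup2 : ∀ (z : α) (hz : z ∉ C) (hzx : z ≠ x) (hzy : z ≠ y),
        Derivable 𝒞 ⟨{x}, {y}, {z} ∪ C, d1,
          Finset.disjoint_union_right.mpr ⟨by simp [hzx, hzx.symm], d2⟩,
          Finset.disjoint_union_right.mpr ⟨by simp [hzy, hzy.symm], d3⟩⟩ :=
      fun z hz hzx hzy => d_congr (IHup z hz hzx hzy) rfl rfl (Finset.union_comm C {z})
    have hCmem : C ∈ ciLattice (⟨{x}, {y}, C, d1, d2, d3⟩ : CI α) :=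
      ⟨Finset.Subset.rfl, by simpa using hxC, by simpa using hyC⟩
    have hmem := hH hCmem
    simp only [Set.mem_iUnion] at hmem
    obtain ⟨c₁, hc₁, hm₁⟩ := hmem
    obtain ⟨A₁, B₁, C₁, e1, e2, e3⟩ := c₁
    simp only [ciLattice, Set.mem_setOf_eq] at hm₁
    obtain ⟨m1, m2, m3⟩ := hm₁
    obtain ⟨p, hpA, hpC⟩ := Finset.not_subset.mp m2
    obtain ⟨q, hqB, hqC⟩ := Finset.not_subset.mp m3
    have hpq : p ≠ q := fun e => Finset.disjoint_left.mp e1 hpA (e ▸ hqB)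
    have hpC1 : p ∉ C₁ := fun h => hpC (m1 h)
    have hqC1 : q ∉ C₁ := fun h => hqC (m1 h)
    have s1 : Derivable 𝒞 ⟨{p}, {q}, C₁, by simp [hpq, Ne.symm hpq], by simp [hpC1], by simp [hqC1]⟩ :=
      d_sub (Finset.singleton_subset_iff.mpr hpA) (Finset.singleton_subset_iff.mpr hqB)
        (Derivable.mem hc₁)
    have s2 : Derivable 𝒞 ⟨{p}, {q}, C, by simp [hpq, Ne.symm hpq], by simp [hpC], by simp [hqC]⟩ :=
      d_up m1 s1
    by_cases hpx : p = x
    · subst hpx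
      by_cases hqy : q = y
      · subst hqy; exact s2
      · exact sc_step (Ne.symm hqy) s2 (IHup q hqC (Ne.symm hpq) hqy)
    · by_cases hpy : p = y
      · subst hpy
        by_cases hqx : q = x
        · subst hqx; exact Derivable.symmetry s2
        · have t : Derivable 𝒞 ⟨({p} : Finset α), {x}, C, d1.symm, d3, d2⟩ :=
            sc_step (Ne.symm hqx) s2 (IHupYX q hqC hqx (Ne.symm hpq))
          exact Derivable.symmetry t
      · by_cases hqx : q = x
        · subst hqx
          have s2' := Derivable.symmetry s2
          exact sc_step (Ne.symm hpy) s2' (IHup p hpC hpx hpy)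
        · by_cases hqy : q = y
          · subst hqy
            have s2' := Derivable.symmetry s2
            have t : Derivable 𝒞 ⟨({q} : Finset α), {x}, C, d1.symm, d3, d2⟩ :=
              sc_step (Ne.symm hpx) s2' (IHupYX p hpC hpx hpy)
            exact Derivable.symmetry t
          · have Pp := IHup2 p hpC hpx hpy
            have Pq := IHup2 q hqC hqx hqy
            exact Derivable.strongContraction s2 Pp Pq

end Main


/-- Completeness of system A relative to semi-lattice inclusion: if
L(c) ⊆ ⋃_{c' ∈ 𝒞} L(c') then 𝒞 ⊢ c. -/
theorem systemA_complete_lattice {α : Type*} [Fintype α] [DecidableEq α]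
    (𝒞 : Set (CI α)) (h𝒞 : 𝒞.Finite) (c : CI α)
    (h : ciLattice c ⊆ ⋃ c' ∈ 𝒞, ciLattice c') :
    Derivable 𝒞 c := by
  exact key (𝒞 := 𝒞) (meas c + 1) c (Nat.lt_succ_self _) h
end

section
/- The closure under system A of a CI statement c = (A,B|C) equals the closure under A of its witness decomposition wdec(c) = {({a},{b}|C) : a ∈ A, b ∈ B}. -/
open Finset

/-- The witness decomposition of a CI statement. -/
def wdec {α : Type*} [DecidableEq α] (c : CI α) : Set (CI α) :=
  {d | ∃ a, ∃ b, ∃ (ha : a ∈ c.A) (hb : b ∈ c.B), d = ⟨{a}, {b}, c.C,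
    Finset.disjoint_singleton_left.2 (by
      simp only [Finset.mem_singleton]
      exact fun h => Finset.disjoint_left.1 c.dAB ha (h ▸ hb)),
    Finset.disjoint_singleton_left.2 (Finset.disjoint_left.1 c.dAC ha),
    Finset.disjoint_singleton_left.2 (Finset.disjoint_left.1 c.dBC hb)⟩}

section Aux

variable {α : Type*} [DecidableEq α]

theorem Derivable.trans' {𝒞 𝒟 : Set (CI α)} (h : ∀ x ∈ 𝒟, Derivable 𝒞 x) {d : CI α}
    (hd : Derivable 𝒟 d) : Derivable 𝒞 d := by
  induction hd with
  | mem h' => exact h _ h'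
  | triviality A C hAC => exact .triviality A C hAC
  | symmetry _ ih => exact .symmetry ih
  | decomposition _ ih => exact .decomposition ih
  | contraction hBD _ _ ih1 ih2 => exact .contraction hBD ih1 ih2
  | strongUnion hAD hBD _ ih => exact .strongUnion hAD hBD ih
  | strongContraction _ _ _ ih1 ih2 ih3 => exact .strongContraction ih1 ih2 ih3

theorem derivable_congr {𝒞 : Set (CI α)} {c : CI α} (h : Derivable 𝒞 c) {d : CI α}
    (hA : c.A = d.A) (hB : c.B = d.B) (hC : c.C = d.C) : Derivable 𝒞 d := by
  cases c; cases d
  simp only at hA hB hC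
  subst hA; subst hB; subst hC
  exact h

/-- Each element of `wdec c` is derivable from `{c}`. -/
theorem wdec_derivable (c : CI α) {d : CI α} (hd : d ∈ wdec c) : Derivable {c} d := by
  obtain ⟨a, b, ha, hb, rfl⟩ := hd
  have hc : Derivable {c} c := .mem rfl
  have h1 : Derivable {c} ⟨c.A, c.B.erase b ∪ {b}, c.C,
      by rw [Finset.union_comm, ← Finset.insert_eq, Finset.insert_erase hb]; exact c.dAB,
      c.dAC,
      by rw [Finset.union_comm, ← Finset.insert_eq, Finset.insert_erase hb]; exact c.dBC⟩ := by
    refine derivable_congr hc rfl ?_ rfl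
    show c.B = c.B.erase b ∪ {b}
    rw [Finset.union_comm, ← Finset.insert_eq, Finset.insert_erase hb]
  have h2 : Derivable {c} ⟨c.A, {b}, c.C, _, _, _⟩ := Derivable.decomposition h1
  have h3 := Derivable.symmetry h2
  have heA : c.A = c.A.erase a ∪ {a} := by
    rw [Finset.union_comm, ← Finset.insert_eq, Finset.insert_erase ha]
  have h4 : Derivable {c} ⟨{b}, c.A.erase a ∪ {a}, c.C,
      by rw [← heA]; exact Finset.disjoint_singleton_left.2 (Finset.disjoint_right.1 c.dAB hb),
      Finset.disjoint_singleton_left.2 (Finset.disjoint_left.1 c.dBC hb),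
      by rw [← heA]; exact c.dAC⟩ := derivable_congr h3 rfl heA rfl
  have h5 : Derivable {c} ⟨{b}, {a}, c.C, _, _, _⟩ := Derivable.decomposition h4
  exact Derivable.symmetry h5

theorem singleton_left_derivable (c : CI α) {a : α} (ha : a ∈ c.A) :
    ∀ B' : Finset α, B' ⊆ c.B → ∀ (h1 : Disjoint ({a} : Finset α) B')
      (h2 : Disjoint ({a} : Finset α) c.C) (h3 : Disjoint B' c.C),
      Derivable (wdec c) ⟨{a}, B', c.C, h1, h2, h3⟩ := by
  intro B'
  induction B' using Finset.induction_on with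
  | empty => intro _ h1 h2 h3; exact .triviality {a} c.C h2
  | @insert b s hbs ih =>
    intro hsub h1 h2 h3
    have hb : b ∈ c.B := hsub (Finset.mem_insert_self b s)
    have hs : s ⊆ c.B := fun x hx => hsub (Finset.mem_insert_of_mem hx)
    have hab : Disjoint ({a} : Finset α) s := by
      rw [Finset.insert_eq] at h1
      exact h1.mono_right Finset.subset_union_right
    have hs3 : Disjoint s c.C := by
      rw [Finset.insert_eq] at h3
      exact (Finset.disjoint_union_left.mp h3).2
    have base := ih hs hab h2 hs3
    have haD : Disjoint ({a} : Finset α) ({b} : Finset α) := by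
      rw [Finset.insert_eq] at h1
      exact h1.mono_right Finset.subset_union_left
    have hsD : Disjoint s ({b} : Finset α) := by
      simp [Finset.disjoint_singleton_right, hbs]
    have su : Derivable (wdec c) ⟨{a}, s, c.C ∪ {b}, _, _, _⟩ :=
      Derivable.strongUnion haD hsD base
    have wd : Derivable (wdec c) ⟨{a}, {b}, c.C,
        Finset.disjoint_singleton_left.2 (by
          simp only [Finset.mem_singleton]
          exact fun h => Finset.disjoint_left.1 c.dAB ha (h ▸ hb)),
        Finset.disjoint_singleton_left.2 (Finset.disjoint_left.1 c.dAC ha),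
        Finset.disjoint_singleton_left.2 (Finset.disjoint_left.1 c.dBC hb)⟩ :=
      .mem ⟨a, b, ha, hb, rfl⟩
    have con : Derivable (wdec c) ⟨{a}, s ∪ {b}, c.C, _, _, _⟩ :=
      Derivable.contraction hsD.symm.symm su wd
    refine derivable_congr con rfl ?_ rfl
    show s ∪ {b} = insert b s
    rw [Finset.union_comm, ← Finset.insert_eq]

theorem left_derivable (c : CI α) :
    ∀ A' : Finset α, A' ⊆ c.A → ∀ (h1 : Disjoint A' c.B)
      (h2 : Disjoint A' c.C) (h3 : Disjoint c.B c.C),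
      Derivable (wdec c) ⟨A', c.B, c.C, h1, h2, h3⟩ := by
  intro A'
  induction A' using Finset.induction_on with
  | empty =>
    intro _ h1 h2 h3
    exact Derivable.symmetry (.triviality c.B c.C h3)
  | @insert a s has ih =>
    intro hsub h1 h2 h3
    have ha : a ∈ c.A := hsub (Finset.mem_insert_self a s)
    have hs : s ⊆ c.A := fun x hx => hsub (Finset.mem_insert_of_mem hx)
    have hsB : Disjoint s c.B := by
      rw [Finset.insert_eq] at h1
      exact (Finset.disjoint_union_left.mp h1).2
    have hsC : Disjoint s c.C := by
      rw [Finset.insert_eq] at h2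
      exact (Finset.disjoint_union_left.mp h2).2
    have base := Derivable.symmetry (ih hs hsB hsC h3)
    have haB : Disjoint ({a} : Finset α) c.B := by
      rw [Finset.insert_eq] at h1
      exact (Finset.disjoint_union_left.mp h1).1
    have haC : Disjoint ({a} : Finset α) c.C := by
      rw [Finset.insert_eq] at h2
      exact (Finset.disjoint_union_left.mp h2).1
    have sing := Derivable.symmetry (singleton_left_derivable c ha c.B (subset_refl _)
      haB haC h3)
    have hBa : Disjoint c.B ({a} : Finset α) := haB.symm
    have hsa : Disjoint s ({a} : Finset α) := by
      simp [Finset.disjoint_singleton_right, has]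
    have su : Derivable (wdec c) ⟨c.B, s, c.C ∪ {a}, _, _, _⟩ :=
      Derivable.strongUnion hBa hsa base
    have con : Derivable (wdec c) ⟨c.B, s ∪ {a}, c.C, _, _, _⟩ :=
      Derivable.contraction hsa.symm.symm su sing
    refine derivable_congr (Derivable.symmetry con) ?_ rfl rfl
    show s ∪ {a} = insert a s
    rw [Finset.union_comm, ← Finset.insert_eq]

end Aux

/-- The closure under system A of a CI statement equals the closure of its
witness decomposition. -/
theorem closure_eq_closure_wdec {α : Type*} [Fintype α] [DecidableEq α]
    (c : CI α) : ∀ d : CI α, Derivable {c} d ↔ Derivable (wdec c) d := by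
  intro d
  constructor
  · intro hd
    refine Derivable.trans' ?_ hd
    intro x hx
    rw [Set.mem_singleton_iff] at hx
    subst hx
    have := left_derivable x x.A (subset_refl _) x.dAB x.dAC x.dBC
    exact derivable_congr this rfl rfl rfl
  · intro hd
    exact Derivable.trans' (fun x hx => wdec_derivable c hx) hd
end

section
/- If strong union and decomposition are sound for the additive implication problem relative to a class F of set functions, then F has the zero-density property: for every F ∈ F, every CI statement c, and every U ∈ L(c), if F a-satisfies c then ΔF(U) = 0. -/
open Finset

def asat {α : Type*} [DecidableEq α] (F : Finset α → ℝ) (c : CI α) : Prop :=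
  F c.C + F (c.A ∪ c.B ∪ c.C) = F (c.A ∪ c.C) + F (c.B ∪ c.C)

def density {α : Type*} [Fintype α] [DecidableEq α] (F : Finset α → ℝ)
    (X : Finset α) : ℝ :=
  ∑ U ∈ Finset.univ.powerset.filter (fun U => X ⊆ U),
    (-1 : ℝ) ^ (U.card - X.card) * F U

lemma pairup {α : Type*} [DecidableEq α] (s : Finset α) (a : α) (ha : a ∈ s)
    (U : Finset α) (hU : a ∉ U) (G : Finset α → ℝ) :
    ∑ W ∈ s.powerset.filter (fun W => U ⊆ W), (-1:ℝ) ^ (W.card - U.card) * G W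
    = ∑ V ∈ (s.erase a).powerset.filter (fun V => U ⊆ V),
        (-1:ℝ) ^ (V.card - U.card) * (G V - G (insert a V)) := by
  rw [← Finset.sum_filter_add_sum_filter_not (s.powerset.filter (fun W => U ⊆ W))
    (fun W => a ∈ W)]
  have hset : (s.powerset.filter (fun W => U ⊆ W)).filter (fun W => ¬ a ∈ W)
      = (s.erase a).powerset.filter (fun V => U ⊆ V) := by
    ext W
    simp only [mem_filter, mem_powerset, Finset.subset_erase]
    tauto
  have h2 : ∑ W ∈ (s.powerset.filter (fun W => U ⊆ W)).filter (fun W => a ∈ W),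
        (-1:ℝ) ^ (W.card - U.card) * G W
      = ∑ V ∈ (s.erase a).powerset.filter (fun V => U ⊆ V),
        (-1:ℝ) ^ ((insert a V).card - U.card) * G (insert a V) := by
    apply Finset.sum_nbij' (i := fun W => W.erase a) (j := fun V => insert a V)
    · intro W hW
      simp only [mem_filter, mem_powerset, Finset.subset_erase] at hW ⊢
      obtain ⟨⟨hWs, hUW⟩, haW⟩ := hW
      exact ⟨⟨(Finset.erase_subset a W).trans hWs, Finset.notMem_erase a W⟩, hUW, hU⟩
    · intro V hV
      simp only [mem_filter, mem_powerset, Finset.subset_erase] at hV ⊢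
      obtain ⟨⟨hVs, haV⟩, hUV⟩ := hV
      exact ⟨⟨Finset.insert_subset ha hVs, hUV.trans (Finset.subset_insert a V)⟩,
        Finset.mem_insert_self a V⟩
    · intro W hW
      simp only [mem_filter] at hW
      exact Finset.insert_erase hW.2
    · intro V hV
      simp only [mem_filter, mem_powerset, Finset.subset_erase] at hV
      exact Finset.erase_insert hV.1.2
    · intro W hW
      simp only [mem_filter] at hW
      rw [Finset.insert_erase hW.2]
  rw [hset, h2, ← Finset.sum_add_distrib]
  apply Finset.sum_congr rfl
  intro V hV
  simp only [mem_filter, mem_powerset, Finset.subset_erase] at hV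
  obtain ⟨⟨hVs, haV⟩, hUV⟩ := hV
  rw [Finset.card_insert_of_notMem haV, Nat.succ_sub (Finset.card_le_card hUV), pow_succ]
  ring


/-- If strong union and decomposition are sound for the additive implication
problem relative to ℱ, then ℱ has the zero-density property. -/
theorem strongUnion_decomposition_sound_implies_zeroDensity
    {α : Type*} [Fintype α] [DecidableEq α] (ℱ : Set (Finset α → ℝ))
    (hSU : ∀ F ∈ ℱ, ∀ (A B C D : Finset α)
      (h1 : Disjoint A B) (h2 : Disjoint A C) (h3 : Disjoint B C)
      (hAD : Disjoint A D) (hBD : Disjoint B D),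
      asat F ⟨A, B, C, h1, h2, h3⟩ →
      asat F ⟨A, B, C ∪ D, h1, by simp_all [Finset.disjoint_union_right],
        by simp_all [Finset.disjoint_union_right]⟩)
    (hDec : ∀ F ∈ ℱ, ∀ (A B D C : Finset α)
      (h1 : Disjoint A (B ∪ D)) (h2 : Disjoint A C) (h3 : Disjoint (B ∪ D) C),
      asat F ⟨A, B ∪ D, C, h1, h2, h3⟩ →
      asat F ⟨A, D, C, by simp_all [Finset.disjoint_union_right], h2,
        by simp_all [Finset.disjoint_union_left]⟩) :
    ∀ F ∈ ℱ, ∀ c : CI α, ∀ U ∈ ciLattice c, asat F c → density F U = 0 := by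
  intro F hF c U hUL hsat
  obtain ⟨hCU, hAU, hBU⟩ := hUL
  obtain ⟨a, haA, haU⟩ := Finset.not_subset.1 hAU
  obtain ⟨b, hbB, hbU⟩ := Finset.not_subset.1 hBU
  have hab : a ≠ b := fun h => Finset.disjoint_left.1 c.dAB haA (h ▸ hbB)
  have haC : a ∉ c.C := Finset.disjoint_left.1 c.dAC haA
  have hbC : b ∉ c.C := Finset.disjoint_left.1 c.dBC hbB
  unfold asat at hsat
  -- step 1: decompose B to {b}
  have hB : c.B \ {b} ∪ {b} = c.B := by
    rw [Finset.sdiff_union_self_eq_union, Finset.union_eq_left]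
    simpa using hbB
  have d1 : Disjoint c.A (c.B \ {b} ∪ {b}) := by rw [hB]; exact c.dAB
  have d3 : Disjoint (c.B \ {b} ∪ {b}) c.C := by rw [hB]; exact c.dBC
  have hpre1 : asat F ⟨c.A, c.B \ {b} ∪ {b}, c.C, d1, c.dAC, d3⟩ := by
    show F c.C + F (c.A ∪ (c.B \ {b} ∪ {b}) ∪ c.C) = F (c.A ∪ c.C) + F ((c.B \ {b} ∪ {b}) ∪ c.C)
    rw [hB]; exact hsat
  have h1 := hDec F hF c.A (c.B \ {b}) {b} c.C d1 c.dAC d3 hpre1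
  have h1' : F c.C + F (c.A ∪ {b} ∪ c.C) = F (c.A ∪ c.C) + F ({b} ∪ c.C) := h1
  -- step 2: symmetry and decompose A to {a}
  have hA : c.A \ {a} ∪ {a} = c.A := by
    rw [Finset.sdiff_union_self_eq_union, Finset.union_eq_left]
    simpa using haA
  have e1 : Disjoint ({b} : Finset α) (c.A \ {a} ∪ {a}) := by
    rw [hA]
    simpa using Finset.disjoint_right.1 c.dAB hbB
  have e2 : Disjoint ({b} : Finset α) c.C := by simpa using hbC
  have e3 : Disjoint (c.A \ {a} ∪ {a}) c.C := by rw [hA]; exact c.dAC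
  have hpre2 : asat F ⟨{b}, c.A \ {a} ∪ {a}, c.C, e1, e2, e3⟩ := by
    show F c.C + F ({b} ∪ (c.A \ {a} ∪ {a}) ∪ c.C) = F ({b} ∪ c.C) + F ((c.A \ {a} ∪ {a}) ∪ c.C)
    rw [hA, Finset.union_comm {b} c.A]
    linarith [h1']
  have h2 := hDec F hF {b} (c.A \ {a}) {a} c.C e1 e2 e3 hpre2
  have h2' : F c.C + F ({b} ∪ {a} ∪ c.C) = F ({b} ∪ c.C) + F ({a} ∪ c.C) := h2
  -- key: for every V ⊇ C avoiding a,b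
  have key : ∀ V : Finset α, c.C ⊆ V → a ∉ V → b ∉ V →
      F V - F (insert a V) - F (insert b V) + F (insert a (insert b V)) = 0 := by
    intro V hCV haV hbV
    have f1 : Disjoint ({a} : Finset α) {b} := Finset.disjoint_singleton.2 hab
    have f2 : Disjoint ({a} : Finset α) c.C := by simpa using haC
    have f3 : Disjoint ({b} : Finset α) c.C := by simpa using hbC
    have fAD : Disjoint ({a} : Finset α) (V \ c.C) := by
      simp only [Finset.disjoint_singleton_left, Finset.mem_sdiff]
      tauto
    have fBD : Disjoint ({b} : Finset α) (V \ c.C) := by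
      simp only [Finset.disjoint_singleton_left, Finset.mem_sdiff]
      tauto
    have hpre3 : asat F ⟨{a}, {b}, c.C, f1, f2, f3⟩ := by
      show F c.C + F ({a} ∪ {b} ∪ c.C) = F ({a} ∪ c.C) + F ({b} ∪ c.C)
      rw [Finset.union_comm {a} {b}]
      linarith [h2']
    have h3 := hSU F hF {a} {b} c.C (V \ c.C) f1 f2 f3 fAD fBD hpre3
    have hV : c.C ∪ V \ c.C = V := Finset.union_sdiff_of_subset hCV
    have h3' : F (c.C ∪ V \ c.C) + F ({a} ∪ {b} ∪ (c.C ∪ V \ c.C))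
        = F ({a} ∪ (c.C ∪ V \ c.C)) + F ({b} ∪ (c.C ∪ V \ c.C)) := h3
    rw [hV] at h3'
    have ea : {a} ∪ V = insert a V := (Finset.insert_eq a V).symm
    have eb : {b} ∪ V = insert b V := (Finset.insert_eq b V).symm
    have eab : {a} ∪ {b} ∪ V = insert a (insert b V) := by
      rw [Finset.union_assoc, eb, Finset.insert_eq a]
    rw [ea, eb, eab] at h3'
    linarith
  -- conclude via double pairing
  unfold density
  rw [pairup Finset.univ a (Finset.mem_univ a) U haU F,
    pairup (Finset.univ.erase a) b (Finset.mem_erase.2 ⟨hab.symm, Finset.mem_univ b⟩) U hbU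
      (fun V => F V - F (insert a V))]
  apply Finset.sum_eq_zero
  intro V hV
  simp only [mem_filter, mem_powerset, Finset.subset_erase] at hV
  obtain ⟨⟨⟨_, haV⟩, hbV⟩, hUV⟩ := hV
  have := key V (hCU.trans hUV) haV hbV
  have hz : F V - F (insert a V) - (F (insert b V) - F (insert a (insert b V))) = 0 := by
    linarith
  rw [hz, mul_zero]
end

section
/- A Kronecker-induced function F_V (whose Möbius inversion is the indicator of the set V) a-satisfies a CI statement c if and only if V ∉ L(c). -/
open Finset

/-- The Kronecker-induced function of V: F_V(X) = 1 if X ⊆ V, else 0. -/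
def kronecker {α : Type*} [DecidableEq α] (V : Finset α) (X : Finset α) : ℝ :=
  if X ⊆ V then 1 else 0

/-- A Kronecker-induced function F_V a-satisfies a CI statement c iff V ∉ L(c). -/
theorem kronecker_asat_iff_not_mem_lattice {α : Type*} [Fintype α] [DecidableEq α]
    (V : Finset α) (c : CI α) :
    asat (kronecker V) c ↔ V ∉ ciLattice c := by
  simp only [asat, kronecker, ciLattice, Set.mem_setOf_eq, Finset.union_subset_iff]
  by_cases ha : c.A ⊆ V <;> by_cases hb : c.B ⊆ V <;> by_cases hc : c.C ⊆ V <;>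
    simp [ha, hb, hc]
end

section
/- The falsification criterion is sound via lattices: if F is a set function with ΔF(U) = 0 for all U in ⋃_{c' ∈ C} L(c') and there exists U₀ ∈ L(c) with U₀ ∉ ⋃_{c' ∈ C} L(c') such that F is the Kronecker-induced function of U₀, then F a-satisfies every statement in C but does not a-satisfy c. -/
open Finset

/-- Soundness of the falsification criterion via lattices. -/
theorem falsification_sound {α : Type*} [Fintype α] [DecidableEq α]
    (𝒞 : Set (CI α)) (h𝒞 : 𝒞.Finite) (c : CI α) (F : Finset α → ℝ) (U₀ : Finset α)
    (hzero : ∀ U ∈ ⋃ c' ∈ 𝒞, ciLattice c', density F U = 0)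
    (hU₀c : U₀ ∈ ciLattice c) (hU₀𝒞 : U₀ ∉ ⋃ c' ∈ 𝒞, ciLattice c')
    (hF : ∀ X : Finset α, F X = if X ⊆ U₀ then 1 else 0) :
    (∀ c' ∈ 𝒞, asat F c') ∧ ¬ asat F c := by
  simp only [Set.mem_iUnion] at hU₀𝒞
  push_neg at hU₀𝒞
  constructor
  · intro c' hc'
    have h := hU₀𝒞 c' hc'
    simp only [ciLattice, Set.mem_setOf_eq, not_and, not_not] at h
    simp only [asat, hF, Finset.union_subset_iff]
    by_cases hA : c'.A ⊆ U₀ <;> by_cases hB : c'.B ⊆ U₀ <;> by_cases hC : c'.C ⊆ U₀ <;>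
      simp_all
  · obtain ⟨hC, hA, hB⟩ := hU₀c
    simp [asat, hF, Finset.union_subset_iff, hA, hB, hC]
end
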